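/- Let ρ be a state on ℂ⁴ (a two-qubit state) whose full correlation tensor is diagonal: Tr(ρ·(σ_i ⊗ σ_j)) = 0 for all i ≠ j with i,j ∈ {1,2,3}. Write p = Re(Tr(ρ·(σ₁⊗σ₁))), q = Re(Tr(ρ·(σ₂⊗σ₂))), r = Re(Tr(ρ·(σ₃⊗σ₃))). If p² + q² + r² > max(|p|, |q|, |r|), then ρ is not separable, i.e. ρ is entangled. (This is the geometric entanglement condition with the standard improper metric tensor, evaluated on the Weyl states.) -/

import Mathlib

open Matrix
open scoped Kronecker ComplexOrder

noncomputable section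

def IsQState {n : Type*} [Fintype n] (ρ : Matrix n n ℂ) : Prop :=
  ρ.PosSemidef ∧ ρ.trace = 1

def IsSepState {dA dB : ℕ}
    (ρ : Matrix (Fin dA × Fin dB) (Fin dA × Fin dB) ℂ) : Prop :=
  ∃ (k : ℕ) (p : Fin k → ℝ)
    (ρ₁ : Fin k → Matrix (Fin dA) (Fin dA) ℂ)
    (ρ₂ : Fin k → Matrix (Fin dB) (Fin dB) ℂ),
    (∀ m, 0 ≤ p m) ∧ (∑ m, p m = 1) ∧
    (∀ m, IsQState (ρ₁ m)) ∧ (∀ m, IsQState (ρ₂ m)) ∧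
    ρ = ∑ m, (p m : ℂ) • (ρ₁ m ⊗ₖ ρ₂ m)

def pauli : Fin 4 → Matrix (Fin 2) (Fin 2) ℂ :=
  ![1,
    !![0, 1; 1, 0],
    !![0, -Complex.I; Complex.I, 0],
    !![1, 0; 0, -1]]

lemma pauli_herm (i : Fin 4) : (pauli i).IsHermitian := by
  fin_cases i
  · exact Matrix.isHermitian_one
  all_goals
    ext a b
    fin_cases a <;> fin_cases b <;>
      simp [pauli, Matrix.conjTranspose_apply]

/-- trace of product of two Hermitian matrices is real -/
lemma trace_mul_herm_real {n : Type*} [Fintype n] [DecidableEq n]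
    {A B : Matrix n n ℂ} (hA : A.IsHermitian) (hB : B.IsHermitian) :
    (A * B).trace = (((A * B).trace).re : ℂ) := by
  have h : star ((A * B).trace) = (A * B).trace := by
    rw [← Matrix.trace_conjTranspose, Matrix.conjTranspose_mul, hA.eq, hB.eq,
      Matrix.trace_mul_comm]
  exact (Complex.conj_eq_iff_re.mp h).symm ▸ rfl

/-- Bloch vector of a qubit state has norm at most 1. -/
lemma bloch_norm_le {τ : Matrix (Fin 2) (Fin 2) ℂ} (h : IsQState τ) :
    ((τ * pauli 1).trace).re ^ 2 + ((τ * pauli 2).trace).re ^ 2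
      + ((τ * pauli 3).trace).re ^ 2 ≤ 1 := by
  obtain ⟨hpsd, htr⟩ := h
  have hherm := hpsd.1
  have h10 : τ 1 0 = star (τ 0 1) := by
    have := congrFun (congrFun hherm.eq 1) 0
    simpa [Matrix.conjTranspose_apply] using this.symm
  set x : ℝ := (τ 0 0).re with hx
  set y : ℝ := (τ 1 1).re with hy
  set z : ℂ := τ 0 1 with hz
  have h00 : τ 0 0 = (x : ℂ) := by
    have := hherm.coe_re_apply_self 0
    exact this.symm
  have h11 : τ 1 1 = (y : ℂ) := by
    have := hherm.coe_re_apply_self 1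
    exact this.symm
  -- trace = 1 gives x + y = 1
  have htr2 : x + y = 1 := by
    have : (τ 0 0 + τ 1 1) = 1 := by rwa [Matrix.trace_fin_two] at htr
    have := congrArg Complex.re this
    simpa using this
  -- determinant-like inequality: |z|^2 ≤ x * y
  have hdet : z.re ^ 2 + z.im ^ 2 ≤ x * y := by
    have hv1 := hpsd.dotProduct_mulVec_nonneg ![-z, (x : ℂ)]
    have hv2 := hpsd.dotProduct_mulVec_nonneg ![(y : ℂ), -(star z)]
    rw [Complex.nonneg_iff] at hv1 hv2
    have e1 : (star ![-z, (x:ℂ)] ⬝ᵥ τ *ᵥ ![-z, (x:ℂ)]).re = x * (x * y - (z.re^2 + z.im^2)) := by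
      simp [dotProduct, Matrix.mulVec, Fin.sum_univ_two, Pi.star_apply, h00, h11, h10, hz,
        Complex.ext_iff, Complex.mul_re, Complex.mul_im]
      ring
    have e2 : (star ![(y:ℂ), -(star z)] ⬝ᵥ τ *ᵥ ![(y:ℂ), -(star z)]).re = y * (x * y - (z.re^2 + z.im^2)) := by
      simp [dotProduct, Matrix.mulVec, Fin.sum_univ_two, Pi.star_apply, h00, h11, h10, hz,
        Complex.ext_iff, Complex.mul_re, Complex.mul_im]
      ring
    have h1 := hv1.1
    have h2 := hv2.1
    rw [e1] at h1
    rw [e2] at h2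
    nlinarith [h1, h2, htr2]
  -- compute the three traces
  have t1 : ((τ * pauli 1).trace).re = 2 * z.re := by
    simp [pauli, Matrix.trace_fin_two, Matrix.mul_apply, Fin.sum_univ_two, h10, hz]
    ring
  have t2 : ((τ * pauli 2).trace).re = -(2 * z.im) := by
    simp [pauli, Matrix.trace_fin_two, Matrix.mul_apply, Fin.sum_univ_two, h10, hz,
      Complex.mul_re, Complex.mul_im]
    ring
  have t3 : ((τ * pauli 3).trace).re = x - y := by
    simp [pauli, Matrix.trace_fin_two, Matrix.mul_apply, Fin.sum_univ_two, h00, h11]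
    ring
  rw [t1, t2, t3]
  nlinarith [hdet, htr2]

lemma key_term_le {M c a b : ℝ} (hc : |c| ≤ M) : c * (a * b) ≤ M * (a^2 + b^2) / 2 := by
  have hM : 0 ≤ M := le_trans (abs_nonneg c) hc
  rcases abs_le.mp hc with ⟨h1, h2⟩
  rcases le_or_gt 0 (a * b) with hab | hab
  · nlinarith [sq_nonneg (a - b)]
  · nlinarith [sq_nonneg (a + b)]

theorem weyl_geometric_condition
    (ρ : Matrix (Fin 2 × Fin 2) (Fin 2 × Fin 2) ℂ) (hρ : IsQState ρ)
    (hdiag : ∀ i j : Fin 4, i ≠ 0 → j ≠ 0 → i ≠ j →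
      (ρ * (pauli i ⊗ₖ pauli j)).trace = 0)
    (p q r : ℝ)
    (hp : p = ((ρ * (pauli 1 ⊗ₖ pauli 1)).trace).re)
    (hq : q = ((ρ * (pauli 2 ⊗ₖ pauli 2)).trace).re)
    (hr : r = ((ρ * (pauli 3 ⊗ₖ pauli 3)).trace).re)
    (h : max (max |p| |q|) |r| < p ^ 2 + q ^ 2 + r ^ 2) :
    ¬ IsSepState ρ := by
  rintro ⟨k, w, ρ₁, ρ₂, hw0, hw1, h1, h2, hsum⟩
  set M : ℝ := max (max |p| |q|) |r| with hM
  have hMp : |p| ≤ M := le_trans (le_max_left _ _) (le_max_left _ _)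
  have hMq : |q| ≤ M := le_trans (le_max_right _ _) (le_max_left _ _)
  have hMr : |r| ≤ M := le_max_right _ _
  -- abbreviations for Bloch components
  set a : Fin k → Fin 4 → ℝ := fun m i => ((ρ₁ m * pauli i).trace).re with ha
  set b : Fin k → Fin 4 → ℝ := fun m i => ((ρ₂ m * pauli i).trace).re with hb
  have ha' : ∀ m i, (ρ₁ m * pauli i).trace = ((a m i : ℝ) : ℂ) := fun m i =>
    trace_mul_herm_real (h1 m).1.1 (pauli_herm i)
  have hb' : ∀ m i, (ρ₂ m * pauli i).trace = ((b m i : ℝ) : ℂ) := fun m i =>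
    trace_mul_herm_real (h2 m).1.1 (pauli_herm i)
  -- correlation decomposition
  have hcorr : ∀ i : Fin 4,
      ((ρ * (pauli i ⊗ₖ pauli i)).trace).re = ∑ m, w m * (a m i * b m i) := by
    intro i
    rw [hsum, Finset.sum_mul, Matrix.trace_sum]
    have : ∀ m : Fin k, (((w m : ℂ) • (ρ₁ m ⊗ₖ ρ₂ m)) * (pauli i ⊗ₖ pauli i)).trace
        = ((w m * (a m i * b m i) : ℝ) : ℂ) := by
      intro m
      rw [Matrix.smul_mul, Matrix.trace_smul, ← Matrix.mul_kronecker_mul,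
        Matrix.trace_kronecker, ha', hb', smul_eq_mul]
      push_cast
      ring
    rw [Finset.sum_congr rfl fun m _ => this m]
    rw [← Complex.ofReal_sum]
    simp
  have hpeq : p = ∑ m, w m * (a m 1 * b m 1) := by rw [hp, hcorr]
  have hqeq : q = ∑ m, w m * (a m 2 * b m 2) := by rw [hq, hcorr]
  have hreq : r = ∑ m, w m * (a m 3 * b m 3) := by rw [hr, hcorr]
  -- the main bound
  have hbound : p ^ 2 + q ^ 2 + r ^ 2 ≤ M := by
    have step : ∀ m : Fin k,
        p * (a m 1 * b m 1) + q * (a m 2 * b m 2) + r * (a m 3 * b m 3) ≤ M := by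
      intro m
      have hA := bloch_norm_le (h1 m)
      have hB := bloch_norm_le (h2 m)
      have e1 := key_term_le (a := a m 1) (b := b m 1) hMp
      have e2 := key_term_le (a := a m 2) (b := b m 2) hMq
      have e3 := key_term_le (a := a m 3) (b := b m 3) hMr
      have hM0 : 0 ≤ M := le_trans (abs_nonneg p) hMp
      simp only [ha, hb] at *
      nlinarith [e1, e2, e3, hA, hB, hM0]
    calc p ^ 2 + q ^ 2 + r ^ 2
        = p * (∑ m, w m * (a m 1 * b m 1)) + q * (∑ m, w m * (a m 2 * b m 2))
            + r * (∑ m, w m * (a m 3 * b m 3)) := by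
          rw [← hpeq, ← hqeq, ← hreq]; ring
      _ = ∑ m, w m * (p * (a m 1 * b m 1) + q * (a m 2 * b m 2) + r * (a m 3 * b m 3)) := by
          rw [Finset.mul_sum, Finset.mul_sum, Finset.mul_sum,
            ← Finset.sum_add_distrib, ← Finset.sum_add_distrib]
          exact Finset.sum_congr rfl fun m _ => by ring
      _ ≤ ∑ m, w m * M := Finset.sum_le_sum fun m _ =>
          mul_le_mul_of_nonneg_left (step m) (hw0 m)
      _ = M := by rw [← Finset.sum_mul, hw1, one_mul]
  linarith
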